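/- Suppose C ∈ M_n is a Hermitian matrix with n distinct eigenvalues, and let A_1, …, A_m ∈ M_n. If W_C(A_1, …, A_m) has a conical point, then {A_1, …, A_m} is a commuting family of normal matrices. -/

import Mathlib

open Matrix

section aux
open NormedSpace

/-- trace kill lemma -/
theorem aux_trace_skew {n : ℕ} (K : Matrix (Fin n) (Fin n) ℂ)
    (h : ∀ H : Matrix (Fin n) (Fin n) ℂ, Hᴴ = -H → (K * H).trace = 0) : K = 0 := by
  have key : ∀ M : Matrix (Fin n) (Fin n) ℂ, (K * M).trace = 0 := by
    intro M
    have h1 := h (M - Mᴴ) (by rw [conjTranspose_sub, conjTranspose_conjTranspose, neg_sub])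
    have h2 := h (Complex.I • (M + Mᴴ)) (by
      rw [conjTranspose_smul, conjTranspose_add, conjTranspose_conjTranspose]
      rw [Complex.star_def, Complex.conj_I, neg_smul, add_comm])
    rw [Matrix.mul_sub, trace_sub, sub_eq_zero] at h1
    rw [Matrix.mul_smul, trace_smul, smul_eq_zero] at h2
    rcases h2 with h2 | h2
    · exact absurd h2 Complex.I_ne_zero
    · rw [Matrix.mul_add, trace_add, h1] at h2
      have : (K * Mᴴ).trace = 0 := by linear_combination h2 / 2
      rw [h1, this]
  have : ∀ i j, K i j = 0 := by
    intro i j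
    have := key (single j i 1)
    rw [Matrix.trace] at this
    simp only [Matrix.diag, Matrix.mul_apply, Matrix.single, Matrix.of_apply,
      mul_ite, mul_one, mul_zero, ite_and, Finset.sum_ite_eq, Finset.sum_ite_eq',
      Finset.mem_univ, if_true] at this
    simpa using this
  ext i j
  simp [this i j]

theorem aux_diag_comm {n : ℕ} {d : Fin n → ℂ} (hd : Function.Injective d)
    {X : Matrix (Fin n) (Fin n) ℂ} (hX : X * diagonal d = diagonal d * X) :
    X = diagonal (fun i => X i i) := by
  ext i j
  by_cases hij : i = j
  · subst hij; simp
  · rw [← Matrix.ext_iff] at hX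
    have h := hX i j
    rw [Matrix.mul_diagonal, Matrix.diagonal_mul] at h
    have hdij : d j ≠ d i := fun hc => hij (hd hc).symm
    have : X i j * (d j - d i) = 0 := by linear_combination h
    rcases mul_eq_zero.mp this with h0 | h0
    · simp [h0, diagonal_apply_ne _ hij]
    · exact absurd (sub_eq_zero.mp h0) hdij

/-- matrices commuting with a Hermitian matrix with distinct eigenvalues commute -/
theorem aux_comm_of_comm_C {n : ℕ} {C : Matrix (Fin n) (Fin n) ℂ} (hC : C.IsHermitian)
    (hdist : Function.Injective hC.eigenvalues) {X Y : Matrix (Fin n) (Fin n) ℂ}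
    (hX : X * C = C * X) (hY : Y * C = C * Y) : X * Y = Y * X := by
  set V : Matrix (Fin n) (Fin n) ℂ := (hC.eigenvectorUnitary : Matrix (Fin n) (Fin n) ℂ) with hVdef
  have hV1 : V * star V = 1 := Matrix.mem_unitaryGroup_iff.mp hC.eigenvectorUnitary.2
  have hV2 : star V * V = 1 := Matrix.mem_unitaryGroup_iff'.mp hC.eigenvectorUnitary.2
  have cancel1 : ∀ Z : Matrix (Fin n) (Fin n) ℂ, V * (star V * Z) = Z := fun Z => by
    rw [← Matrix.mul_assoc, hV1, Matrix.one_mul]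
  have cancel2 : ∀ Z : Matrix (Fin n) (Fin n) ℂ, star V * (V * Z) = Z := fun Z => by
    rw [← Matrix.mul_assoc, hV2, Matrix.one_mul]
  set d : Fin n → ℂ := fun i => (hC.eigenvalues i : ℂ) with hddef
  have hd : Function.Injective d := fun a b hab => hdist (Complex.ofReal_inj.mp hab)
  have hspec : C = V * diagonal d * star V := hC.spectral_theorem
  have hmul : ∀ Z W : Matrix (Fin n) (Fin n) ℂ,
      (star V * Z * V) * (star V * W * V) = star V * (Z * W) * V := by
    intro Z W
    simp only [Matrix.mul_assoc, cancel1]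
  have hCconj : star V * C * V = diagonal d := by
    rw [hspec]
    simp only [Matrix.mul_assoc, cancel2]
    rw [hV2, Matrix.mul_one]
  have keyd : ∀ Z : Matrix (Fin n) (Fin n) ℂ, Z * C = C * Z →
      (star V * Z * V) * diagonal d = diagonal d * (star V * Z * V) := by
    intro Z hZ
    rw [← hCconj, hmul, hmul, hZ]
  have hXd := aux_diag_comm hd (keyd X hX)
  have hYd := aux_diag_comm hd (keyd Y hY)
  have hcomm : (star V * X * V) * (star V * Y * V) = (star V * Y * V) * (star V * X * V) := by
    have heq : (fun i => (star V * X * V) i i * (star V * Y * V) i i)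
        = fun i => (star V * Y * V) i i * (star V * X * V) i i := funext fun i => mul_comm _ _
    rw [hXd, hYd, diagonal_mul_diagonal, heq, diagonal_mul_diagonal]
  rw [hmul, hmul] at hcomm
  have unconj : ∀ Z : Matrix (Fin n) (Fin n) ℂ, V * (star V * Z * V) * star V = Z := by
    intro Z
    simp only [Matrix.mul_assoc, cancel1]
    rw [hV1, Matrix.mul_one]
  have h := congrArg (fun M => V * M * star V) hcomm
  rw [unconj, unconj] at h
  exact h

theorem aux_exp_star {n : ℕ} (H : Matrix (Fin n) (Fin n) ℂ) (hH : Hᴴ = -H) (t : ℝ) :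
    star (exp (t • H)) = exp (-(t • H)) := by
  rw [Matrix.star_eq_conjTranspose, ← Matrix.exp_conjTranspose]
  congr 1
  rw [conjTranspose_smul, hH]
  simp

theorem aux_exp_unitary {n : ℕ} (H : Matrix (Fin n) (Fin n) ℂ) (hH : Hᴴ = -H) (t : ℝ) :
    exp (t • H) ∈ Matrix.unitaryGroup (Fin n) ℂ := by
  rw [Matrix.mem_unitaryGroup_iff', aux_exp_star H hH t]
  have h2 := Matrix.exp_add_of_commute (-(t • H)) (t • H)
      (Commute.neg_left (Commute.refl _))
  rw [← h2]
  simp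

end aux

/-- The joint `C`-numerical range of a tuple of matrices
`W_C(A_1, …, A_m) = {(tr(C U*A₁U), …, tr(C U*AₘU)) : U unitary} ⊆ ℂ^m`. -/
noncomputable def jointCNumRange {n m : ℕ} (C : Matrix (Fin n) (Fin n) ℂ)
    (A : Fin m → Matrix (Fin n) (Fin n) ℂ) : Set (Fin m → ℂ) :=
  { p | ∃ U ∈ Matrix.unitaryGroup (Fin n) ℂ, ∀ j, p j = (C * (star U * A j * U)).trace }

/-- A point `p` of a set `S ⊆ ℂ^m`, identified with a subset of `ℝ^{2m}`, is a conical
point if there is an invertible real-affine transformation `f` of `ℂ^m` with `f p = 0`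
and all `2m` real coordinates of the image `f '' S` nonpositive. -/
def IsConicalPointC {m : ℕ} (S : Set (Fin m → ℂ)) (p : Fin m → ℂ) : Prop :=
  p ∈ S ∧ ∃ f : (Fin m → ℂ) ≃ᵃ[ℝ] (Fin m → ℂ),
    f p = 0 ∧ ∀ x ∈ S, ∀ j, (f x j).re ≤ 0 ∧ (f x j).im ≤ 0

section main
open NormedSpace
attribute [local instance] Matrix.linftyOpNormedRing Matrix.linftyOpNormedAlgebra

noncomputable def auxTraceCLM (n : ℕ) : Matrix (Fin n) (Fin n) ℂ →L[ℝ] ℂ :=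
  LinearMap.toContinuousLinearMap (Matrix.traceLinearMap (Fin n) ℝ ℂ)

/-- Key first-order condition: every conjugated matrix commutes with C. -/
theorem aux_key {n m : ℕ}
    (C : Matrix (Fin n) (Fin n) ℂ)
    (A : Fin m → Matrix (Fin n) (Fin n) ℂ)
    (p : Fin m → ℂ) (f : (Fin m → ℂ) ≃ᵃ[ℝ] (Fin m → ℂ))
    (hf0 : f p = 0) (hneg : ∀ x ∈ jointCNumRange C A, ∀ j, (f x j).re ≤ 0 ∧ (f x j).im ≤ 0)
    (U₀ : Matrix (Fin n) (Fin n) ℂ) (hU₀ : U₀ ∈ Matrix.unitaryGroup (Fin n) ℂ)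
    (hp : ∀ j, p j = (C * (star U₀ * A j * U₀)).trace)
    (A' : Fin m → Matrix (Fin n) (Fin n) ℂ) (hA' : ∀ j, A' j = star U₀ * A j * U₀)
    (H : Matrix (Fin n) (Fin n) ℂ) (hH : Hᴴ = -H) :
    ∀ j, (C * (Hᴴ * A' j + A' j * H)).trace = 0 := by
  classical
  set g : ℝ → Matrix (Fin n) (Fin n) ℂ := fun t => exp (t • H) with hg
  have hgU : ∀ t, g t ∈ Matrix.unitaryGroup (Fin n) ℂ := fun t => aux_exp_unitary H hH t
  have hstar : ∀ t, star (g t) = exp (t • Hᴴ) := by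
    intro t
    rw [hg]
    rw [aux_exp_star H hH t, hH]
    congr 1
    simp
  set γ : ℝ → (Fin m → ℂ) := fun t j => (C * (star (g t) * A' j * g t)).trace with hγ
  have hγS : ∀ t, γ t ∈ jointCNumRange C A := by
    intro t
    refine ⟨U₀ * g t, mul_mem hU₀ (hgU t), fun j => ?_⟩
    simp only [hγ, hA']
    rw [Matrix.star_mul]
    simp only [Matrix.mul_assoc]
  have hg0 : g 0 = 1 := by simp [hg]
  have hγ0 : γ 0 = p := by
    funext j
    simp only [hγ, hg0, star_one, Matrix.one_mul, Matrix.mul_one, hp j, hA']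
  -- derivatives
  have hgd : HasDerivAt g H 0 := by
    have := hasDerivAt_exp_smul_const (𝕂 := ℝ) H 0
    simp only [zero_smul, exp_zero, one_mul] at this
    exact this
  have hhd : HasDerivAt (fun t => star (g t)) Hᴴ 0 := by
    have h := hasDerivAt_exp_smul_const (𝕂 := ℝ) Hᴴ 0
    simp only [zero_smul, exp_zero, one_mul] at h
    have heq : (fun t : ℝ => star (g t)) = fun t : ℝ => exp (t • Hᴴ) := funext hstar
    rw [heq]
    exact h
  set v : Fin m → ℂ := fun j => (C * (Hᴴ * A' j + A' j * H)).trace with hv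
  have hγd : HasDerivAt γ v 0 := by
    rw [hasDerivAt_pi]
    intro j
    have h1 : HasDerivAt (fun t => star (g t) * A' j) (Hᴴ * A' j) 0 := hhd.mul_const _
    have h2 : HasDerivAt (fun t => star (g t) * A' j * g t)
        (Hᴴ * A' j * g 0 + star (g 0) * A' j * H) 0 := h1.mul hgd
    rw [hg0, star_one, Matrix.mul_one, Matrix.one_mul] at h2
    have h3 : HasDerivAt (fun t => C * (star (g t) * A' j * g t))
        (C * (Hᴴ * A' j + A' j * H)) 0 := by
      exact h2.const_mul C
    exact ((auxTraceCLM n).hasFDerivAt).comp_hasDerivAt 0 h3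
  -- compose with f
  set L : (Fin m → ℂ) →L[ℝ] (Fin m → ℂ) :=
    LinearMap.toContinuousLinearMap (f.linear : (Fin m → ℂ) →ₗ[ℝ] (Fin m → ℂ)) with hL
  have hdecomp : ∀ x, f x = L x + f 0 := by
    intro x
    have h := AffineMap.decomp (f : (Fin m → ℂ) →ᵃ[ℝ] (Fin m → ℂ))
    have := congrFun h x
    simpa [hL] using this
  have hq : HasDerivAt (fun t => f (γ t)) (L v) 0 := by
    have h := (L.hasFDerivAt.comp_hasDerivAt 0 hγd).add_const (f 0)
    exact h.congr_of_eventuallyEq (Filter.Eventually.of_forall fun t => (hdecomp (γ t)))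
  have hLv : L v = 0 := by
    funext j
    have h4 : HasDerivAt (fun t => f (γ t) j) (L v j) 0 := hasDerivAt_pi.1 hq j
    have hre : HasDerivAt (fun t => (f (γ t) j).re) ((L v j).re) 0 :=
      (Complex.reCLM.hasFDerivAt).comp_hasDerivAt 0 h4
    have him : HasDerivAt (fun t => (f (γ t) j).im) ((L v j).im) 0 :=
      (Complex.imCLM.hasFDerivAt).comp_hasDerivAt 0 h4
    have hmaxre : ∀ t, (f (γ t) j).re ≤ (f (γ 0) j).re := by
      intro t
      rw [hγ0, hf0]
      simpa using (hneg (γ t) (hγS t) j).1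
    have hmaxim : ∀ t, (f (γ t) j).im ≤ (f (γ 0) j).im := by
      intro t
      rw [hγ0, hf0]
      simpa using (hneg (γ t) (hγS t) j).2
    have hlmre : IsLocalMax (fun t => (f (γ t) j).re) (0 : ℝ) :=
      Filter.Eventually.of_forall hmaxre
    have hlmim : IsLocalMax (fun t => (f (γ t) j).im) (0 : ℝ) :=
      Filter.Eventually.of_forall hmaxim
    have hre0 : (L v j).re = 0 := hlmre.hasDerivAt_eq_zero hre
    have him0 : (L v j).im = 0 := hlmim.hasDerivAt_eq_zero him
    exact Complex.ext hre0 him0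
  have hv0 : v = 0 := by
    have : f.linear v = f.linear 0 := by
      rw [map_zero]
      simpa [hL] using hLv
    exact f.linear.injective this
  intro j
  exact congrFun hv0 j

end main

theorem stmt_13 {n m : ℕ} (hn : 0 < n) (hm : 0 < m)
    (C : Matrix (Fin n) (Fin n) ℂ) (hC : C.IsHermitian)
    (hdist : Function.Injective hC.eigenvalues)
    (A : Fin m → Matrix (Fin n) (Fin n) ℂ)
    (hcp : ∃ p, IsConicalPointC (jointCNumRange C A) p) :
    (∀ i, A i * (A i)ᴴ = (A i)ᴴ * A i) ∧ (∀ i j, A i * A j = A j * A i) := by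
  obtain ⟨p, hpS, f, hf0, hneg⟩ := hcp
  obtain ⟨U₀, hU₀, hp⟩ := hpS
  obtain ⟨A', hA'⟩ : ∃ A' : Fin m → Matrix (Fin n) (Fin n) ℂ,
      ∀ j, A' j = star U₀ * A j * U₀ := ⟨_, fun j => rfl⟩
  have hkey := fun H hH => aux_key C A p f hf0 hneg U₀ hU₀ hp A' hA' H hH
  have hcomm : ∀ j, A' j * C = C * A' j := by
    intro j
    have hz : ∀ H : Matrix (Fin n) (Fin n) ℂ, Hᴴ = -H →
        ((C * A' j - A' j * C) * H).trace = 0 := by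
      intro H hH
      have h := hkey H hH j
      rw [hH] at h
      calc ((C * A' j - A' j * C) * H).trace
          = (C * (A' j * H)).trace - ((A' j * C) * H).trace := by
            rw [Matrix.sub_mul, trace_sub, Matrix.mul_assoc]
        _ = (C * (A' j * H)).trace - (C * (H * A' j)).trace := by
            rw [Matrix.trace_mul_comm (A' j * C) H,
              show H * (A' j * C) = (H * A' j) * C from (Matrix.mul_assoc H (A' j) C).symm,
              Matrix.trace_mul_comm (H * A' j) C]
        _ = (C * ((-H) * A' j + A' j * H)).trace := by
            rw [Matrix.mul_add, trace_add, Matrix.neg_mul, Matrix.mul_neg, trace_neg]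
            ring
        _ = 0 := h
    have h0 := aux_trace_skew _ hz
    exact (sub_eq_zero.mp h0).symm
  have hcommH : ∀ j, (A' j)ᴴ * C = C * (A' j)ᴴ := by
    intro j
    have h := congrArg Matrix.conjTranspose (hcomm j)
    rw [Matrix.conjTranspose_mul, Matrix.conjTranspose_mul, hC.eq] at h
    exact h.symm
  have hU1 : U₀ * star U₀ = 1 := Matrix.mem_unitaryGroup_iff.mp hU₀
  have hU2 : star U₀ * U₀ = 1 := Matrix.mem_unitaryGroup_iff'.mp hU₀
  have cancel1 : ∀ Z : Matrix (Fin n) (Fin n) ℂ, U₀ * (star U₀ * Z) = Z := fun Z => by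
    rw [← Matrix.mul_assoc, hU1, Matrix.one_mul]
  have cancel2 : ∀ Z : Matrix (Fin n) (Fin n) ℂ, star U₀ * (U₀ * Z) = Z := fun Z => by
    rw [← Matrix.mul_assoc, hU2, Matrix.one_mul]
  have prodeq : ∀ X Y : Matrix (Fin n) (Fin n) ℂ,
      (U₀ * X * star U₀) * (U₀ * Y * star U₀) = U₀ * (X * Y) * star U₀ := by
    intro X Y
    simp only [Matrix.mul_assoc, cancel1, cancel2]
  have hAeq : ∀ i, U₀ * A' i * star U₀ = A i := by
    intro i
    rw [hA' i]
    simp only [Matrix.mul_assoc, cancel1]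
    rw [hU1, Matrix.mul_one]
  have hAHeq : ∀ i, U₀ * (A' i)ᴴ * star U₀ = (A i)ᴴ := by
    intro i
    have h := congrArg Matrix.conjTranspose (hAeq i)
    simpa [Matrix.conjTranspose_mul, Matrix.star_eq_conjTranspose, Matrix.mul_assoc] using h
  constructor
  · intro i
    rw [← hAHeq i, ← hAeq i, prodeq, prodeq,
      aux_comm_of_comm_C hC hdist (hcomm i) (hcommH i)]
  · intro i j
    rw [← hAeq i, ← hAeq j, prodeq, prodeq,
      aux_comm_of_comm_C hC hdist (hcomm i) (hcomm j)]
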